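/- Let α be a partial action of a topological group G on a topological space X, let X̃ = (G × X)/∼ with quotient map q and induced continuous action α̃ given by α̃_s(q(t,x)) = q(st,x), and let ι : X → X̃ be ι(x) = q(e,x). Then: (1) ι is injective and continuous; (2) ι(X) is open in X̃ and ι is an open map onto its image, so ι is a homeomorphism of X onto ι(X); (3) ι(α_t(x)) = α̃_t(ι(x)) for every t ∈ G and x ∈ X_{t⁻¹}; (4) X̃ is the α̃-orbit of ι(X), i.e. X̃ = ⋃_{t∈G} α̃_t(ι(X)). -/

import Mathlib

/-- A partial action of a topological group `G` on a topological space `X`. -/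
structure TopPartialAction (G : Type*) (X : Type*) [Group G] [TopologicalSpace G]
    [IsTopologicalGroup G] [TopologicalSpace X] where
  dom : G → Set X
  act : G → X → X
  isOpen_dom : ∀ t, IsOpen (dom t)
  bijOn : ∀ t, Set.BijOn (act t) (dom t⁻¹) (dom t)
  isOpen_graph : IsOpen {p : G × X | p.2 ∈ dom p.1⁻¹}
  continuousOn : ContinuousOn (fun p : G × X => act p.1 p.2) {p : G × X | p.2 ∈ dom p.1⁻¹}
  dom_one : dom 1 = Set.univ
  act_one : ∀ x, act 1 x = x
  act_comp : ∀ s t x, x ∈ dom t⁻¹ → act t x ∈ dom s⁻¹ →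
    x ∈ dom (s * t)⁻¹ ∧ act (s * t) x = act s (act t x)

/-- The relation `(r, x) ∼ (s, y) ↔ x ∈ X_{r⁻¹ s} ∧ α_{s⁻¹ r}(x) = y` on `G × X`. -/
def TopPartialAction.rel {G X : Type*} [Group G] [TopologicalSpace G] [IsTopologicalGroup G]
    [TopologicalSpace X] (α : TopPartialAction G X) (p q : G × X) : Prop :=
  p.2 ∈ α.dom (p.1⁻¹ * q.1) ∧ α.act (q.1⁻¹ * p.1) p.2 = q.2

namespace TopPartialAction

variable {G X : Type*} [Group G] [TopologicalSpace G] [IsTopologicalGroup G]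
  [TopologicalSpace X] (α : TopPartialAction G X)

lemma rel_refl (p : G × X) : α.rel p p := by
  refine ⟨?_, ?_⟩ <;> simp [α.dom_one, α.act_one]

lemma rel_symm {p q : G × X} (h : α.rel p q) : α.rel q p := by
  obtain ⟨h1, h2⟩ := h
  have h1' : p.2 ∈ α.dom ((q.1⁻¹ * p.1)⁻¹) := by
    simpa [mul_inv_rev] using h1
  have hmem : q.2 ∈ α.dom (q.1⁻¹ * p.1) := by
    rw [← h2]
    exact (α.bijOn (q.1⁻¹ * p.1)).mapsTo h1'
  have hmem' : α.act (q.1⁻¹ * p.1) p.2 ∈ α.dom ((p.1⁻¹ * q.1)⁻¹) := by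
    rw [h2]; simpa [mul_inv_rev] using hmem
  obtain ⟨_, hc⟩ := α.act_comp (p.1⁻¹ * q.1) (q.1⁻¹ * p.1) p.2 h1' hmem'
  refine ⟨by simpa [mul_inv_rev] using hmem, ?_⟩
  rw [← h2, ← hc]
  have he : (p.1⁻¹ * q.1) * (q.1⁻¹ * p.1) = 1 := by group
  rw [he, α.act_one]

lemma rel_trans {p q r : G × X} (h : α.rel p q) (h' : α.rel q r) : α.rel p r := by
  obtain ⟨h1, h2⟩ := h
  obtain ⟨h3, h4⟩ := h'
  have h1' : p.2 ∈ α.dom ((q.1⁻¹ * p.1)⁻¹) := by simpa [mul_inv_rev] using h1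
  have h3' : α.act (q.1⁻¹ * p.1) p.2 ∈ α.dom ((r.1⁻¹ * q.1)⁻¹) := by
    rw [h2]; simpa [mul_inv_rev] using h3
  obtain ⟨hd, hc⟩ := α.act_comp (r.1⁻¹ * q.1) (q.1⁻¹ * p.1) p.2 h1' h3'
  have he : (r.1⁻¹ * q.1) * (q.1⁻¹ * p.1) = r.1⁻¹ * p.1 := by group
  rw [he] at hd hc
  refine ⟨by simpa [mul_inv_rev] using hd, ?_⟩
  rw [hc, h2, h4]

lemma rel_equivalence : Equivalence α.rel :=
  ⟨α.rel_refl, α.rel_symm, α.rel_trans⟩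

lemma quot_mk_eq_iff (p q : G × X) :
    Quot.mk α.rel p = Quot.mk α.rel q ↔ α.rel p q :=
  Quot.eq.trans (α.rel_equivalence.eqvGen_iff)

end TopPartialAction

/-- Properties of the canonical map `ι : X → X̃ = (G × X)/∼`, `ι x = q (1, x)`:
it is injective, continuous, an open map (hence a homeomorphism onto its open image),
it intertwines the partial action `α` with the induced global action `α̃ = β`,
and `X̃` is the `β`-orbit of `ι(X)`. -/
theorem TopPartialAction.iota_properties {G X : Type*} [Group G] [TopologicalSpace G]
    [IsTopologicalGroup G] [TopologicalSpace X] (α : TopPartialAction G X)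
    (β : G → Quot α.rel → Quot α.rel)
    (hβ : ∀ s t x, β s (Quot.mk α.rel (t, x)) = Quot.mk α.rel (s * t, x)) :
    Function.Injective (fun x : X => Quot.mk α.rel (1, x)) ∧
    Continuous (fun x : X => Quot.mk α.rel (1, x)) ∧
    IsOpenMap (fun x : X => Quot.mk α.rel (1, x)) ∧
    IsOpen (Set.range fun x : X => Quot.mk α.rel (1, x)) ∧
    (∀ t x, x ∈ α.dom t⁻¹ →
      Quot.mk α.rel (1, α.act t x) = β t (Quot.mk α.rel (1, x))) ∧
    (∀ y : Quot α.rel, ∃ t x, y = β t (Quot.mk α.rel (1, x))) := by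
  have hinj : Function.Injective (fun x : X => Quot.mk α.rel (1, x)) := by
    intro x y h
    have := (α.quot_mk_eq_iff (1, x) (1, y)).mp h
    obtain ⟨-, h2⟩ := this
    simpa [α.act_one] using h2
  have hcont : Continuous (fun x : X => Quot.mk α.rel (1, x)) :=
    (continuous_quot_mk).comp (Continuous.prodMk_right 1)
  have hopen : IsOpenMap (fun x : X => Quot.mk α.rel (1, x)) := by
    intro U hU
    rw [isOpen_coinduced]
    have hset : (Quot.mk α.rel) ⁻¹' ((fun x : X => Quot.mk α.rel (1, x)) '' U) =
        {p : G × X | p.2 ∈ α.dom p.1⁻¹} ∩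
          (fun p : G × X => α.act p.1 p.2) ⁻¹' U := by
      ext ⟨t, x⟩
      simp only [Set.mem_preimage, Set.mem_image, Set.mem_inter_iff, Set.mem_setOf_eq]
      constructor
      · rintro ⟨u, huU, hq⟩
        have hr := (α.quot_mk_eq_iff (t, x) (1, u)).mp hq.symm
        obtain ⟨h1, h2⟩ := hr
        simp only [mul_one, inv_one, one_mul] at h1 h2
        exact ⟨h1, by simpa [h2] using huU⟩
      · rintro ⟨h1, h2⟩
        refine ⟨α.act t x, h2, ?_⟩
        refine ((α.quot_mk_eq_iff (t, x) (1, α.act t x)).mpr ?_).symm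
        exact ⟨by simpa using h1, by simp⟩
    rw [hset]
    exact α.continuousOn.isOpen_inter_preimage α.isOpen_graph hU
  refine ⟨hinj, hcont, hopen, ?_, ?_, ?_⟩
  · have := hopen Set.univ isOpen_univ
    simpa [Set.image_univ] using this
  · intro t x hx
    rw [hβ t 1 x, mul_one]
    refine ((α.quot_mk_eq_iff (t, x) (1, α.act t x)).mpr ?_).symm
    exact ⟨by simpa using hx, by simp⟩
  · intro y
    induction y using Quot.ind with
    | _ p =>
      exact ⟨p.1, p.2, by rw [hβ p.1 1 p.2, mul_one]⟩
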